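/- Let X₁ and X₂ be random variables on a probability space (Ω, 𝓕, P) taking values in measurable spaces 𝒳₁ and 𝒳₂, let τ₁ : 𝒳₁ → ℝ and τ₂ : 𝒳₂ → ℝ be measurable feature statistics, and define the IT outlier scores λⱼ(x) := −log₂ P(τⱼ(Xⱼ) ≥ τⱼ(x)) for j = 1, 2. Assume the law of τ₁(X₁) is atomless. Then for every c ≥ 0 the event {λ₁(X₁) ≥ c} has probability exactly 2^{−c} > 0, and for every x₂ ∈ 𝒳₂ the conditional probability satisfies P( λ₂(X₂) ≥ λ₂(x₂) ∣ λ₁(X₁) ≥ c ) ≤ 2^{c − λ₂(x₂)}. -/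

import Mathlib

open MeasureTheory ENNReal ProbabilityTheory

section Aux

variable {Ω : Type*} [MeasurableSpace Ω]

/-- The survival function of `Y` under `P`. -/
noncomputable def survG (P : Measure Ω) (Y : Ω → ℝ) (t : ℝ) : ℝ≥0∞ :=
  P {ω | t ≤ Y ω}

lemma survG_antitone (P : Measure Ω) (Y : Ω → ℝ) : Antitone (survG P Y) :=
  fun s t hst => measure_mono (fun ω (h : t ≤ Y ω) => le_trans hst h)

lemma survG_measurable (P : Measure Ω) (Y : Ω → ℝ) : Measurable (survG P Y) :=
  (survG_antitone P Y).measurable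

lemma survG_ne_top (P : Measure Ω) [IsProbabilityMeasure P] (Y : Ω → ℝ) (t : ℝ) :
    survG P Y t ≠ ⊤ :=
  (lt_of_le_of_lt (measure_mono (Set.subset_univ _))
    (by simp [lt_top_iff_ne_top])).ne

/-- The "S-set" of points whose survival value is at most `q` is upward closed. -/
lemma survS_upper (P : Measure Ω) [IsProbabilityMeasure P] (Y : Ω → ℝ) (q : ℝ)
    {s t : ℝ} (hs : (survG P Y s).toReal ≤ q) (hst : s ≤ t) :
    (survG P Y t).toReal ≤ q :=
  le_trans (ENNReal.toReal_mono (survG_ne_top P Y s) (survG_antitone P Y hst)) hs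

/-- Key inequality: the probability that the survival value of `Y` is at most `q`
is at most `q`. -/
lemma surv_le (P : Measure Ω) [IsProbabilityMeasure P] (Y : Ω → ℝ)
    {q : ℝ} (hq : 0 ≤ q) :
    P {ω | (survG P Y (Y ω)).toReal ≤ q} ≤ ENNReal.ofReal q := by
  set S : Set ℝ := {t | (survG P Y t).toReal ≤ q} with hS
  have hupper : ∀ s ∈ S, ∀ t, s ≤ t → t ∈ S := fun s hs t hst => survS_upper P Y q hs hst
  have hmem_le : ∀ t ∈ S, survG P Y t ≤ ENNReal.ofReal q := fun t ht =>
    (ENNReal.le_ofReal_iff_toReal_le (survG_ne_top P Y t) hq).2 ht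
  by_cases hne : S.Nonempty
  · -- construct a countable antitone cofinal family in S
    have key : ∃ t : ℕ → ℝ, (∀ n, t n ∈ S) ∧ Antitone t ∧ ∀ y ∈ S, ∃ n, t n ≤ y := by
      by_cases hbdd : BddBelow S
      · set t₀ := sInf S with ht₀
        by_cases hmem : t₀ ∈ S
        · exact ⟨fun _ => t₀, fun _ => hmem, fun _ _ _ => le_rfl,
            fun y hy => ⟨0, csInf_le hbdd hy⟩⟩
        · refine ⟨fun n => t₀ + 1 / (n + 1), fun n => ?_, fun m n hmn => ?_, fun y hy => ?_⟩
          · have h1 : t₀ < t₀ + 1 / (n + 1) := by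
              have : (0:ℝ) < 1 / (n + 1) := by positivity
              linarith
            obtain ⟨s, hs, hs'⟩ := exists_lt_of_csInf_lt hne h1
            exact hupper s hs _ hs'.le
          · have hmn' : (m:ℝ) ≤ n := Nat.cast_le.mpr hmn
            have : (1:ℝ) / (n + 1) ≤ 1 / (m + 1) :=
              one_div_le_one_div_of_le (by positivity) (by linarith)
            show t₀ + 1 / (n + 1) ≤ t₀ + 1 / (m + 1)
            linarith
          · have hy0 : t₀ < y := lt_of_le_of_ne (csInf_le hbdd hy)
              (fun h => hmem (h ▸ hy))
            obtain ⟨n, hn⟩ := exists_nat_one_div_lt (sub_pos.2 hy0)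
            exact ⟨n, by linarith⟩
      · refine ⟨fun n => -(n : ℝ), fun n => ?_, fun m n hmn => ?_, fun y _ => ?_⟩
        · obtain ⟨s, hs, hs'⟩ := not_bddBelow_iff.1 hbdd (-(n:ℝ))
          exact hupper s hs _ hs'.le
        · have hmn' : (m:ℝ) ≤ n := Nat.cast_le.mpr hmn
          show -(n:ℝ) ≤ -(m:ℝ)
          linarith
        · obtain ⟨n, hn⟩ := exists_nat_ge (-y)
          exact ⟨n, show -(n:ℝ) ≤ y by linarith⟩
    obtain ⟨t, htS, htanti, hcof⟩ := key
    have hsub : {ω | (survG P Y (Y ω)).toReal ≤ q} ⊆ ⋃ n, {ω | t n ≤ Y ω} := by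
      intro ω hω
      obtain ⟨n, hn⟩ := hcof (Y ω) hω
      exact Set.mem_iUnion.2 ⟨n, hn⟩
    have hdir : Directed (· ⊆ ·) (fun n => {ω | t n ≤ Y ω}) := by
      intro m n
      rcases le_total m n with h | h
      · exact ⟨n, fun ω hω => le_trans (htanti h) hω, fun ω hω => hω⟩
      · exact ⟨m, fun ω hω => hω, fun ω hω => le_trans (htanti h) hω⟩
    calc P {ω | (survG P Y (Y ω)).toReal ≤ q} ≤ P (⋃ n, {ω | t n ≤ Y ω}) :=
          measure_mono hsub
      _ = ⨆ n, P {ω | t n ≤ Y ω} := hdir.measure_iUnion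
      _ ≤ ENNReal.ofReal q := iSup_le fun n => hmem_le _ (htS n)
  · have : {ω | (survG P Y (Y ω)).toReal ≤ q} = ∅ := by
      ext ω
      simp only [Set.mem_setOf_eq, Set.mem_empty_iff_false, iff_false]
      exact fun h => hne ⟨Y ω, h⟩
    simp [this]

/-- The S-set is nonempty for positive `q`: the survival function tends to `0`. -/
lemma survS_nonempty (P : Measure Ω) [IsProbabilityMeasure P] (Y : Ω → ℝ)
    (hY : Measurable Y) {q : ℝ} (hq : 0 < q) :
    ∃ t : ℝ, (survG P Y t).toReal ≤ q := by
  have hmeas : ∀ n : ℕ, NullMeasurableSet {ω | (n : ℝ) ≤ Y ω} P :=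
    fun n => (measurableSet_le measurable_const hY).nullMeasurableSet
  have hanti : Antitone (fun n : ℕ => {ω | (n : ℝ) ≤ Y ω}) := by
    intro m n hmn ω hω
    simp only [Set.mem_setOf_eq] at hω ⊢
    have hmn' : (m:ℝ) ≤ n := Nat.cast_le.mpr hmn
    linarith
  have hempty : (⋂ n : ℕ, {ω | (n : ℝ) ≤ Y ω}) = ∅ := by
    ext ω
    simp only [Set.mem_iInter, Set.mem_setOf_eq, Set.mem_empty_iff_false, iff_false, not_forall]
    obtain ⟨n, hn⟩ := exists_nat_gt (Y ω)
    exact ⟨n, not_le.2 hn⟩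
  have htend := tendsto_measure_iInter_atTop (μ := P) hmeas hanti
    ⟨0, measure_ne_top P _⟩
  rw [hempty] at htend
  simp only [measure_empty] at htend
  have : ∀ᶠ n : ℕ in Filter.atTop, P {ω | (n : ℝ) ≤ Y ω} < ENNReal.ofReal q :=
    htend.eventually_lt_const (by simpa using ENNReal.ofReal_pos.2 hq)
  obtain ⟨n, hn⟩ := this.exists
  refine ⟨n, ?_⟩
  have := (ENNReal.le_ofReal_iff_toReal_le (survG_ne_top P Y n) hq.le).1 hn.le
  exact this

/-- Under atomlessness, the probability that the survival value of `Y` is at most `q`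
equals `q`, for `0 < q ≤ 1`. -/
lemma surv_eq (P : Measure Ω) [IsProbabilityMeasure P] (Y : Ω → ℝ)
    (hY : Measurable Y) (hatom : ∀ t : ℝ, P {ω | Y ω = t} = 0)
    {q : ℝ} (hq0 : 0 < q) (hq1 : q ≤ 1) :
    P {ω | (survG P Y (Y ω)).toReal ≤ q} = ENNReal.ofReal q := by
  refine le_antisymm (surv_le P Y hq0.le) ?_
  set S : Set ℝ := {t | (survG P Y t).toReal ≤ q} with hS
  have hupper : ∀ s ∈ S, ∀ t, s ≤ t → t ∈ S := fun s hs t hst => survS_upper P Y q hs hst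
  have hne : S.Nonempty := survS_nonempty P Y hY hq0
  by_cases hbdd : BddBelow S
  · set t₀ := sInf S with ht₀
    -- survival value at t₀ is at least ofReal q, by left continuity
    have hleft : ∀ s, s < t₀ → ENNReal.ofReal q ≤ survG P Y s := by
      intro s hs
      have hsnot : s ∉ S := fun h => absurd (csInf_le hbdd h) (not_le.2 hs)
      have : q ≤ (survG P Y s).toReal := le_of_not_ge hsnot
      exact ENNReal.ofReal_le_of_le_toReal this
    have hGt₀ : ENNReal.ofReal q ≤ survG P Y t₀ := by
      have hmeas : ∀ n : ℕ, NullMeasurableSet {ω | t₀ - 1 / (n + 1) ≤ Y ω} P :=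
        fun n => (measurableSet_le measurable_const hY).nullMeasurableSet
      have hanti : Antitone (fun n : ℕ => {ω | t₀ - 1 / (n + 1) ≤ Y ω}) := by
        intro m n hmn ω hω
        simp only [Set.mem_setOf_eq] at hω ⊢
        have hmn' : (m:ℝ) ≤ n := Nat.cast_le.mpr hmn
        have h1 : (1:ℝ) / (n + 1) ≤ 1 / (m + 1) :=
          one_div_le_one_div_of_le (by positivity) (by linarith)
        linarith
      have hinter : (⋂ n : ℕ, {ω | t₀ - 1 / (n + 1) ≤ Y ω}) = {ω | t₀ ≤ Y ω} := by
        ext ω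
        simp only [Set.mem_iInter, Set.mem_setOf_eq]
        constructor
        · intro h
          by_contra hc
          push_neg at hc
          obtain ⟨n, hn⟩ := exists_nat_one_div_lt (sub_pos.2 hc)
          have := h n
          linarith
        · intro h n
          have : (0:ℝ) < 1 / (n + 1) := by positivity
          linarith
      have htend := tendsto_measure_iInter_atTop (μ := P) hmeas hanti
        ⟨0, measure_ne_top P _⟩
      rw [hinter] at htend
      refine ge_of_tendsto htend (Filter.Eventually.of_forall fun n => ?_)
      exact hleft _ (by
        have : (0:ℝ) < 1 / (n + 1) := by positivity
        linarith)
    -- the open ray above t₀ is contained in S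
    have hIoi : Set.Ioi t₀ ⊆ S := by
      intro y hy
      obtain ⟨s, hs, hs'⟩ := exists_lt_of_csInf_lt hne hy
      exact hupper s hs y hs'.le
    have hsplit : P {ω | t₀ ≤ Y ω} = P {ω | t₀ < Y ω} + P {ω | Y ω = t₀} := by
      have hset : {ω | t₀ ≤ Y ω} = {ω | t₀ < Y ω} ∪ {ω | Y ω = t₀} := by
        ext ω
        simp only [Set.mem_union, Set.mem_setOf_eq]
        constructor
        · intro h; rcases lt_or_eq_of_le h with h | h
          · exact Or.inl h
          · exact Or.inr h.symm
        · rintro (h | h); exacts [h.le, h.ge]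
      rw [hset]
      exact measure_union (Set.disjoint_left.2 fun ω hω h =>
          ne_of_gt (show t₀ < Y ω from hω) (show Y ω = t₀ from h))
        (hY (measurableSet_singleton t₀))
    have hgt : P {ω | t₀ < Y ω} = survG P Y t₀ := by
      have h2 : survG P Y t₀ = P {ω | t₀ < Y ω} + P {ω | Y ω = t₀} := hsplit
      rw [h2, hatom t₀, add_zero]
    calc ENNReal.ofReal q ≤ survG P Y t₀ := hGt₀
      _ = P {ω | t₀ < Y ω} := hgt.symm
      _ ≤ P {ω | (survG P Y (Y ω)).toReal ≤ q} :=
          measure_mono fun ω hω => hIoi hω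
  · -- S is all of ℝ, so the set is everything
    have hall : ∀ t : ℝ, t ∈ S := by
      intro t
      obtain ⟨s, hs, hs'⟩ := not_bddBelow_iff.1 hbdd t
      exact hupper s hs t hs'.le
    have : {ω | (survG P Y (Y ω)).toReal ≤ q} = Set.univ :=
      Set.eq_univ_of_forall fun ω => hall (Y ω)
    rw [this, measure_univ]
    exact ENNReal.ofReal_le_one.2 hq1

end Aux

/-- Lemma 1: weak IT outliers rarely cause strong ones.
For random variables `X₁ : Ω → 𝒳₁`, `X₂ : Ω → 𝒳₂`, measurable feature statistics
`τ₁, τ₂`, and IT outlier scores `λⱼ(x) = -log₂ P(τⱼ(Xⱼ) ≥ τⱼ(x))`, if the law of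
`τ₁(X₁)` is atomless then for every `c ≥ 0` the event `{λ₁(X₁) ≥ c}` has
probability exactly `2^{-c} > 0`, and for every `x₂`,
`P(λ₂(X₂) ≥ λ₂(x₂) ∣ λ₁(X₁) ≥ c) ≤ 2^{c − λ₂(x₂)}`. -/
theorem weak_outliers_rarely_cause_strong_ones
    {Ω : Type*} [MeasurableSpace Ω] (P : Measure Ω) [IsProbabilityMeasure P]
    {X1 : Type*} [MeasurableSpace X1] {X2 : Type*} [MeasurableSpace X2]
    (ξ1 : Ω → X1) (ξ2 : Ω → X2) (hξ1 : Measurable ξ1) (hξ2 : Measurable ξ2)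
    (τ1 : X1 → ℝ) (τ2 : X2 → ℝ) (hτ1 : Measurable τ1) (hτ2 : Measurable τ2)
    (hatomless : ∀ t : ℝ, P {ω | τ1 (ξ1 ω) = t} = 0)
    (lam1 : X1 → ℝ)
    (hlam1 : ∀ x, lam1 x = -Real.logb 2 (P {ω | τ1 x ≤ τ1 (ξ1 ω)}).toReal)
    (lam2 : X2 → ℝ)
    (hlam2 : ∀ x, lam2 x = -Real.logb 2 (P {ω | τ2 x ≤ τ2 (ξ2 ω)}).toReal) :
    ∀ c : ℝ, 0 ≤ c →
      (P {ω | c ≤ lam1 (ξ1 ω)} = ENNReal.ofReal ((2 : ℝ) ^ (-c)) ∧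
       0 < P {ω | c ≤ lam1 (ξ1 ω)}) ∧
      (∀ x2 : X2,
        P[{ω | lam2 x2 ≤ lam2 (ξ2 ω)} | {ω | c ≤ lam1 (ξ1 ω)}]
          ≤ ENNReal.ofReal ((2 : ℝ) ^ (c - lam2 x2))) := by
  intro c hc
  set Y1 : Ω → ℝ := fun ω => τ1 (ξ1 ω) with hY1def
  have hY1 : Measurable Y1 := hτ1.comp hξ1
  set Y2 : Ω → ℝ := fun ω => τ2 (ξ2 ω) with hY2def
  have hY2 : Measurable Y2 := hτ2.comp hξ2
  have hlam1' : ∀ ω, lam1 (ξ1 ω) = -Real.logb 2 (survG P Y1 (Y1 ω)).toReal :=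
    fun ω => hlam1 (ξ1 ω)
  have hlam2' : ∀ ω, lam2 (ξ2 ω) = -Real.logb 2 (survG P Y2 (Y2 ω)).toReal :=
    fun ω => hlam2 (ξ2 ω)
  set p : ℝ := (2 : ℝ) ^ (-c) with hpdef
  have hp : 0 < p := Real.rpow_pos_of_pos two_pos _
  have hp1 : p ≤ 1 := Real.rpow_le_one_of_one_le_of_nonpos one_le_two (neg_nonpos.2 hc)
  set g : Ω → ℝ := fun ω => (survG P Y1 (Y1 ω)).toReal with hgdef
  have hg0 : ∀ ω, 0 ≤ g ω := fun ω => ENNReal.toReal_nonneg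
  -- the event and its survival-set version
  have hEF : {ω | c ≤ lam1 (ξ1 ω)} ⊆ {ω | g ω ≤ p} := by
    intro ω hω
    simp only [Set.mem_setOf_eq] at hω ⊢
    rw [hlam1' ω] at hω
    rcases eq_or_lt_of_le (hg0 ω) with h0 | h0
    · rw [← h0]; exact hp.le
    · have hlog : Real.logb 2 (g ω) ≤ -c := by linarith
      calc g ω = (2:ℝ) ^ Real.logb 2 (g ω) :=
            (Real.rpow_logb two_pos (by norm_num) h0).symm
        _ ≤ (2:ℝ) ^ (-c) := Real.rpow_le_rpow_of_exponent_le one_le_two hlog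
  have hFE : {ω | g ω ≤ p} ⊆ {ω | c ≤ lam1 (ξ1 ω)} ∪ {ω | g ω = 0} := by
    intro ω hω
    simp only [Set.mem_setOf_eq, Set.mem_union] at hω ⊢
    rcases eq_or_lt_of_le (hg0 ω) with h0 | h0
    · exact Or.inr h0.symm
    · left
      rw [hlam1' ω]
      have : Real.logb 2 (g ω) ≤ Real.logb 2 p :=
        Real.logb_le_logb_of_le one_lt_two h0 hω
      rw [hpdef, Real.logb_rpow (by norm_num : (0:ℝ) < 2) (by norm_num)] at this
      linarith
  have hnull : P {ω | g ω = 0} = 0 := by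
    have hle : ∀ n : ℕ, P {ω | g ω = 0} ≤ ENNReal.ofReal (1 / (n + 1)) := by
      intro n
      refine le_trans (measure_mono ?_) (surv_le P Y1 (by positivity))
      intro ω hω
      simp only [Set.mem_setOf_eq] at hω ⊢
      rw [show (survG P Y1 (Y1 ω)).toReal = g ω from rfl, hω]
      positivity
    have htend : Filter.Tendsto (fun n : ℕ => ENNReal.ofReal (1 / (n + 1)))
        Filter.atTop (nhds 0) := by
      rw [show (0 : ℝ≥0∞) = ENNReal.ofReal 0 by simp]
      exact ENNReal.tendsto_ofReal tendsto_one_div_add_atTop_nhds_zero_nat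
    exact le_antisymm (ge_of_tendsto htend (Filter.Eventually.of_forall hle)) zero_le
  have hFeq : P {ω | g ω ≤ p} = ENNReal.ofReal p :=
    surv_eq P Y1 hY1 (fun t => hatomless t) hp hp1
  have hPE : P {ω | c ≤ lam1 (ξ1 ω)} = ENNReal.ofReal p := by
    refine le_antisymm (le_trans (measure_mono hEF) hFeq.le) ?_
    calc ENNReal.ofReal p = P {ω | g ω ≤ p} := hFeq.symm
      _ ≤ P ({ω | c ≤ lam1 (ξ1 ω)} ∪ {ω | g ω = 0}) := measure_mono hFE
      _ ≤ P {ω | c ≤ lam1 (ξ1 ω)} + P {ω | g ω = 0} := measure_union_le _ _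
      _ = P {ω | c ≤ lam1 (ξ1 ω)} := by rw [hnull, add_zero]
  have hposE : 0 < P {ω | c ≤ lam1 (ξ1 ω)} := by
    rw [hPE]; exact ENNReal.ofReal_pos.2 hp
  refine ⟨⟨hPE, hposE⟩, ?_⟩
  -- second part
  intro x2
  have hBmeas : MeasurableSet {ω | c ≤ lam1 (ξ1 ω)} := by
    have heq : {ω | c ≤ lam1 (ξ1 ω)} =
        (fun ω => -Real.logb 2 (survG P Y1 (Y1 ω)).toReal) ⁻¹' Set.Ici c := by
      ext ω
      simp only [Set.mem_setOf_eq, Set.mem_preimage, Set.mem_Ici, hlam1' ω]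
    rw [heq]
    have hmeas : Measurable fun ω => -Real.logb 2 (survG P Y1 (Y1 ω)).toReal := by
      have h1 : Measurable fun ω => (survG P Y1 (Y1 ω)).toReal :=
        ((survG_measurable P Y1).comp hY1).ennreal_toReal
      have h2 : Measurable fun x : ℝ => Real.logb 2 x := by
        simpa [Real.logb] using Real.measurable_log.div_const (Real.log 2)
      exact (h2.comp h1).neg
    exact hmeas measurableSet_Ici
  rw [ProbabilityTheory.cond_apply hBmeas]
  set q : ℝ := (survG P Y2 (τ2 x2)).toReal with hqdef
  have hq0 : 0 ≤ q := ENNReal.toReal_nonneg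
  have hlamx2 : lam2 x2 = -Real.logb 2 q := hlam2 x2
  have hPBinv : (P {ω | c ≤ lam1 (ξ1 ω)})⁻¹ = ENNReal.ofReal ((2:ℝ) ^ c) := by
    rw [hPE, ← ENNReal.ofReal_inv_of_pos hp]
    congr 1
    rw [hpdef, Real.rpow_neg (by norm_num : (0:ℝ) ≤ 2), inv_inv]
  rcases eq_or_lt_of_le hq0 with hq | hq
  · -- q = 0, λ₂(x2) = 0, RHS ≥ 1
    have hlz : lam2 x2 = 0 := by rw [hlamx2, ← hq, Real.logb_zero, neg_zero]
    have h1le : (1 : ℝ≥0∞) ≤ ENNReal.ofReal ((2:ℝ) ^ (c - lam2 x2)) := by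
      rw [hlz, sub_zero]
      rw [show (1 : ℝ≥0∞) = ENNReal.ofReal 1 by simp]
      exact ENNReal.ofReal_le_ofReal (Real.one_le_rpow one_le_two hc)
    refine le_trans ?_ h1le
    calc (P {ω | c ≤ lam1 (ξ1 ω)})⁻¹ * P ({ω | c ≤ lam1 (ξ1 ω)} ∩ _)
        ≤ (P {ω | c ≤ lam1 (ξ1 ω)})⁻¹ * P {ω | c ≤ lam1 (ξ1 ω)} :=
          mul_le_mul_right (measure_mono Set.inter_subset_left) _
      _ = 1 := ENNReal.inv_mul_cancel hposE.ne' (measure_ne_top P _)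
  · -- q > 0
    have hAsub : {ω | lam2 x2 ≤ lam2 (ξ2 ω)} ⊆
        {ω | (survG P Y2 (Y2 ω)).toReal ≤ q} := by
      intro ω hω
      simp only [Set.mem_setOf_eq] at hω ⊢
      rw [hlamx2, hlam2' ω] at hω
      rcases eq_or_lt_of_le
        (ENNReal.toReal_nonneg : (0:ℝ) ≤ (survG P Y2 (Y2 ω)).toReal) with h0 | h0
      · rw [← h0]; exact hq.le
      · have hlog : Real.logb 2 (survG P Y2 (Y2 ω)).toReal ≤ Real.logb 2 q := by linarith
        calc (survG P Y2 (Y2 ω)).toReal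
            = (2:ℝ) ^ Real.logb 2 (survG P Y2 (Y2 ω)).toReal :=
              (Real.rpow_logb two_pos (by norm_num) h0).symm
          _ ≤ (2:ℝ) ^ Real.logb 2 q := Real.rpow_le_rpow_of_exponent_le one_le_two hlog
          _ = q := Real.rpow_logb two_pos (by norm_num) hq
    have hPA : P {ω | lam2 x2 ≤ lam2 (ξ2 ω)} ≤ ENNReal.ofReal q :=
      le_trans (measure_mono hAsub) (surv_le P Y2 hq0)
    have hRHS : ENNReal.ofReal ((2:ℝ) ^ (c - lam2 x2)) =
        ENNReal.ofReal ((2:ℝ) ^ c) * ENNReal.ofReal q := by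
      rw [← ENNReal.ofReal_mul (by positivity)]
      congr 1
      rw [sub_eq_add_neg, Real.rpow_add two_pos]
      congr 1
      rw [hlamx2, neg_neg]
      exact Real.rpow_logb two_pos (by norm_num) hq
    rw [hRHS, hPBinv]
    exact mul_le_mul_right (le_trans (measure_mono Set.inter_subset_right) hPA) _
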